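/- Let k and ℓ be natural numbers with k ≥ 1 and ℓ ≥ 1, and suppose ν₂(ℓ) > ν₂(k). Then g(k,ℓ) = g(k−1,ℓ) and g(k−1,ℓ−1) = 0. -/

import Mathlib

/-- `ℓ` contains `m` to base 2: there exists `k` with `m < 2^k ≤ ℓ`, and every
binary digit of `m` is at most the corresponding binary digit of `ℓ`
(equivalently, the bitwise AND of `m` and `ℓ` equals `m`). -/
def ContainsBase2 (l m : ℕ) : Prop :=
  (∃ k, m < 2 ^ k ∧ 2 ^ k ≤ l) ∧ m &&& l = m

-- `g ℓ m = 1` if `m ≥ 0` and `ℓ` contains `m` to base 2, and `g ℓ m = 0` otherwise.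
open Classical in
noncomputable def g (l : ℕ) (m : ℤ) : ℤ :=
  if 0 ≤ m ∧ ContainsBase2 l m.toNat then 1 else 0

theorem stmt_10 (k l : ℕ) (hk : 1 ≤ k) (hl : 1 ≤ l)
    (h : padicValNat 2 l > padicValNat 2 k) :
    g k l = g (k - 1) l ∧ g (k - 1) ((l : ℤ) - 1) = 0 := by
  set v := padicValNat 2 k with hv
  -- decompose k = 2^(v+1)*c + 2^v
  have hkdvd : 2 ^ v ∣ k := pow_padicValNat_dvd
  have hknd : ¬ 2 ^ (v + 1) ∣ k :=
    pow_succ_padicValNat_not_dvd (p := 2) (by omega)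
  obtain ⟨a, ha⟩ := hkdvd
  have haodd : a % 2 = 1 := by
    rcases Nat.mod_two_eq_zero_or_one a with h2 | h2
    · exfalso; apply hknd
      refine ⟨a / 2, ?_⟩
      rw [ha, pow_succ]
      have h3 : a = 2 * (a / 2) := by omega
      calc 2 ^ v * a = 2 ^ v * (2 * (a / 2)) := by rw [← h3]
        _ = 2 ^ v * 2 * (a / 2) := by ring
    · exact h2
  obtain ⟨c, hc⟩ : ∃ c, a = 2 * c + 1 := ⟨a / 2, by omega⟩
  have hk2 : k = 2 ^ (v + 1) * c + 2 ^ v := by rw [ha, hc, pow_succ]; ring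
  -- decompose l = 2^(v+1)*e
  have hldvd : 2 ^ (v + 1) ∣ l :=
    (pow_dvd_pow 2 (by omega)).trans (pow_padicValNat_dvd (p := 2) (n := l))
  obtain ⟨e, he⟩ := hldvd
  have he1 : 1 ≤ e := by
    rcases Nat.eq_zero_or_pos e with rfl | h0
    · simp at he; omega
    · exact h0
  have hpow : (0:ℕ) < 2 ^ v := Nat.two_pow_pos v
  have hpow1 : (0:ℕ) < 2 ^ (v + 1) := Nat.two_pow_pos _
  -- bits of l below v+1 are zero
  have hbl : ∀ i, i ≤ v → l.testBit i = false := by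
    intro i hi
    rw [he, Nat.testBit_two_pow_mul]
    simp [Nat.not_le.mpr (by omega : i < v + 1)]
  -- k - 1 = 2^(v+1)*c + (2^v - 1)
  have hk1 : k - 1 = 2 ^ (v + 1) * c + (2 ^ v - 1) := by omega
  -- bits of k and k-1 agree above v
  have hbk : ∀ i, v < i → k.testBit i = (k - 1).testBit i := by
    intro i hi
    rw [hk1, hk2, Nat.testBit_two_pow_mul_add c (by rw [pow_succ]; omega) i,
      Nat.testBit_two_pow_mul_add c (by rw [pow_succ]; omega) i]
    simp [Nat.not_lt.mpr (by omega : v + 1 ≤ i)]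
  -- bit v of k-1 is false
  have hkv1 : (k - 1).testBit v = false := by
    rw [hk1, Nat.testBit_two_pow_mul_add c (by rw [pow_succ]; omega) v]
    simp [Nat.lt_succ_self]
  -- bit v of l-1 is true
  have hl1v : (l - 1).testBit v = true := by
    have : l - 1 = 2 ^ (v + 1) * (e - 1) + (2 ^ (v + 1) - 1) := by
      rw [he]; cases' e with e; · omega
      simp [Nat.mul_succ]; omega
    rw [this, Nat.testBit_two_pow_mul_add (e - 1) (by omega) v]
    simp [Nat.lt_succ_self]
  -- AND equality
  have hand : l &&& k = l &&& (k - 1) := by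
    apply Nat.eq_of_testBit_eq
    intro i
    rw [Nat.testBit_and, Nat.testBit_and]
    rcases le_or_gt i v with hi | hi
    · rw [hbl i hi]; simp
    · rw [hbk i hi]
  -- equivalence of containment
  have hcont : ContainsBase2 k l ↔ ContainsBase2 (k - 1) l := by
    constructor
    · rintro ⟨⟨j, hj1, hj2⟩, hj3⟩
      refine ⟨⟨j, hj1, ?_⟩, by rw [← hand]; exact hj3⟩
      rcases eq_or_lt_of_le hj2 with heq | hlt
      · exfalso
        -- k = 2^j forces l = 0
        have hl0 : l = 0 := by
          apply Nat.eq_of_testBit_eq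
          intro i
          rcases eq_or_ne i j with rfl | hne
          · simp [Nat.testBit_lt_two_pow hj1]
          · have := congrArg (fun n => n.testBit i) hj3
            simp only [Nat.testBit_and] at this
            rw [← heq, Nat.testBit_two_pow_of_ne (Ne.symm hne)] at this
            simpa using this.symm
        omega
      · omega
    · rintro ⟨⟨j, hj1, hj2⟩, hj3⟩
      exact ⟨⟨j, hj1, by omega⟩, by rw [hand]; exact hj3⟩
  constructor
  · classical
    simp only [g, Int.toNat_natCast]
    by_cases hC : ContainsBase2 k l
    · rw [if_pos ⟨by positivity, hC⟩, if_pos ⟨by positivity, hcont.1 hC⟩]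
    · rw [if_neg (by rintro ⟨-, h2⟩; exact hC h2),
        if_neg (by rintro ⟨-, h2⟩; exact hC (hcont.2 h2))]
  · simp only [g]
    rw [if_neg]
    rintro ⟨h1, h2, h3⟩
    have htn : ((l:ℤ) - 1).toNat = l - 1 := by omega
    rw [htn] at h3
    have := congrArg (fun n => n.testBit v) h3
    simp only [Nat.testBit_and] at this
    rw [hkv1, hl1v] at this
    simp at this
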